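/- Let C be cyclic of order 2^n, n ≥ 3, with involution ⊛ induced by a ↦ a^{2^{n-1}-1}. Let J^⊛ = { z z^⊛ : z ∈ V(F_2 C), z z^⊛ ∈ F_2 C² }. Then J^⊛ = ⟨a^{2^{n-1}}⟩ × S_⊛(C)², where S_⊛(C) is the group of ⊛-symmetric normalized units, and |S_⊛(C)²| = 2^{2^{n-2}-1}. -/

import Mathlib

open MonoidAlgebra Finset

noncomputable section

/-- The cyclic group of order `2^n`, written multiplicatively. -/
abbrev Cgrp (n : ℕ) : Type := Multiplicative (ZMod (2 ^ n))

/-- The group algebra `F₂C` of the cyclic group of order `2^n` over the field of two elements. -/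
abbrev FC (n : ℕ) : Type := MonoidAlgebra (ZMod 2) (Cgrp n)

/-- The augmentation map `χ : F₂C → F₂`. -/
def aug (n : ℕ) : FC n →ₐ[ZMod 2] ZMod 2 :=
  MonoidAlgebra.lift (ZMod 2) (ZMod 2) (Cgrp n) 1

/-- The generator `a` of the cyclic group `C`. -/
def agen (n : ℕ) : Cgrp n := Multiplicative.ofAdd (1 : ZMod (2 ^ n))

/-- The generator `a` viewed inside the group algebra `F₂C`. -/
def A (n : ℕ) : FC n := MonoidAlgebra.of (ZMod 2) (Cgrp n) (agen n)

/-- Group elements of `C` as elements of the group algebra. -/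
def Gel (n : ℕ) (i : ZMod (2 ^ n)) : FC n :=
  MonoidAlgebra.of (ZMod 2) (Cgrp n) (Multiplicative.ofAdd i)

/-- The involution `*` of `F₂C` induced by `a ↦ a⁻¹`. -/
def starOne (n : ℕ) : FC n ≃ₐ[ZMod 2] FC n :=
  MonoidAlgebra.domCongr (ZMod 2) (ZMod 2) (MulEquiv.inv (Cgrp n))

/-- The scalar `2^(n-1) - 1` in `ZMod (2^n)`. -/
def cf (n : ℕ) : ZMod (2 ^ n) := 2 ^ (n - 1) - 1

lemma two_pow_zmod (n : ℕ) : ((2 : ZMod (2 ^ n))) ^ n = 0 := by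
  have h : ((2 ^ n : ℕ) : ZMod (2 ^ n)) = 0 := ZMod.natCast_self _
  push_cast at h
  exact h

lemma cf_sq (n : ℕ) (hn : 2 ≤ n) : cf n * cf n = 1 := by
  have h0 := two_pow_zmod n
  have e1 : (2 : ZMod (2 ^ n)) ^ (n - 1) * 2 ^ (n - 1) = 0 := by
    rw [← pow_add]
    have h : n - 1 + (n - 1) = n + (n - 2) := by omega
    rw [h, pow_add, h0, zero_mul]
  have e2 : (2 : ZMod (2 ^ n)) * 2 ^ (n - 1) = 0 := by
    have h : (2 : ZMod (2 ^ n)) * 2 ^ (n - 1) = 2 ^ (n - 1 + 1) := (pow_succ' 2 (n-1)).symm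
    rw [h]
    have h' : n - 1 + 1 = n := by omega
    rw [h', h0]
  have key : cf n * cf n = 2 ^ (n - 1) * 2 ^ (n - 1) - 2 * 2 ^ (n - 1) + 1 := by
    unfold cf; ring
  rw [key, e1, e2]; ring

/-- The automorphism `z ↦ (2^(n-1)-1)·z` of `ZMod (2^n)`. -/
def thetaAdd (n : ℕ) (hn : 2 ≤ n) : ZMod (2 ^ n) ≃+ ZMod (2 ^ n) where
  toFun z := cf n * z
  invFun z := cf n * z
  left_inv z := by show cf n * (cf n * z) = z; rw [← mul_assoc, cf_sq n hn, one_mul]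
  right_inv z := by show cf n * (cf n * z) = z; rw [← mul_assoc, cf_sq n hn, one_mul]
  map_add' x y := mul_add _ _ _

/-- The automorphism `a ↦ a^(2^(n-1)-1)` of `C`. -/
def theta (n : ℕ) (hn : 2 ≤ n) : Cgrp n ≃* Cgrp n :=
  AddEquiv.toMultiplicative (thetaAdd n hn)

/-- The involution `⊛` of `F₂C` induced by `a ↦ a^(2^(n-1)-1)`. -/
def starTwo (n : ℕ) (hn : 2 ≤ n) : FC n ≃ₐ[ZMod 2] FC n :=
  MonoidAlgebra.domCongr (ZMod 2) (ZMod 2) (theta n hn)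

/-- The group `V(F₂C)` of normalized units, as a subgroup of the unit group of `F₂C`. -/
def Vgrp (n : ℕ) : Subgroup (FC n)ˣ where
  carrier := {u | aug n (↑u : FC n) = 1}
  one_mem' := by simp [Set.mem_setOf_eq]
  mul_mem' := by
    intro u v hu hv
    simp only [Set.mem_setOf_eq, Units.val_mul, map_mul] at *
    rw [hu, hv, one_mul]
  inv_mem' := by
    intro u hu
    simp only [Set.mem_setOf_eq] at *
    have h : aug n ((↑u : FC n) * (↑u⁻¹ : FC n)) = 1 := by
      rw [Units.mul_inv, map_one]
    rw [map_mul, hu, one_mul] at h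
    exact h

/-- The sum `Ĉ` of all elements of `C` inside the group algebra. -/
def hatC (n : ℕ) : FC n := ∑ g : Cgrp n, MonoidAlgebra.of (ZMod 2) (Cgrp n) g

/-- The sum `Ĉ²` of all elements of the subgroup `C²` of squares. -/
def hatCsq (n : ℕ) : FC n :=
  ∑ g ∈ Finset.image (fun h : Cgrp n => h * h) Finset.univ,
    MonoidAlgebra.of (ZMod 2) (Cgrp n) g

/-- The subspace `F₂C²` of `F₂C` spanned by the subgroup of squares. -/
def sqSpan (n : ℕ) : Submodule (ZMod 2) (FC n) :=
  Submodule.span (ZMod 2) (Set.range fun g : Cgrp n => MonoidAlgebra.of (ZMod 2) (Cgrp n) (g * g))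

lemma hatC_mul_hatC (n : ℕ) (hn : 1 ≤ n) : hatC n * hatC n = 0 := by
  classical
  unfold hatC
  rw [Finset.sum_mul_sum]
  have h1 : ∀ g : Cgrp n,
      ∑ h : Cgrp n, MonoidAlgebra.of (ZMod 2) (Cgrp n) g * MonoidAlgebra.of (ZMod 2) (Cgrp n) h
        = hatC n := by
    intro g
    have h2 : ∀ h : Cgrp n,
        MonoidAlgebra.of (ZMod 2) (Cgrp n) g * MonoidAlgebra.of (ZMod 2) (Cgrp n) h
          = MonoidAlgebra.of (ZMod 2) (Cgrp n) (g * h) := by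
      intro h; rw [map_mul]
    unfold hatC
    calc ∑ h : Cgrp n, MonoidAlgebra.of (ZMod 2) (Cgrp n) g * MonoidAlgebra.of (ZMod 2) (Cgrp n) h
        = ∑ h : Cgrp n, MonoidAlgebra.of (ZMod 2) (Cgrp n) (g * h) := by
          exact Finset.sum_congr rfl fun h _ => h2 h
      _ = ∑ h : Cgrp n, MonoidAlgebra.of (ZMod 2) (Cgrp n) h :=
          Fintype.sum_equiv (Equiv.mulLeft g) _ _ (fun h => rfl)
  calc (∑ g : Cgrp n, ∑ h : Cgrp n,
        MonoidAlgebra.of (ZMod 2) (Cgrp n) g * MonoidAlgebra.of (ZMod 2) (Cgrp n) h)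
      = ∑ _g : Cgrp n, hatC n := Finset.sum_congr rfl fun g _ => h1 g
    _ = (Fintype.card (Cgrp n)) • hatC n := by rw [Finset.sum_const, Finset.card_univ]
    _ = 0 := by
        rw [← Nat.cast_smul_eq_nsmul (ZMod 2)]
        have hc : ((Fintype.card (Cgrp n) : ℕ) : ZMod 2) = 0 := by
          have : Fintype.card (Cgrp n) = 2 ^ n := by simp [Cgrp, ZMod.card]
          rw [this]
          push_cast
          rw [show ((2:ZMod 2) = 0) from rfl, zero_pow (by omega)]
        rw [hc, zero_smul]

lemma add_self_FC (n : ℕ) (x : FC n) : x + x = 0 := by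
  rw [← two_smul (ZMod 2) x, show ((2:ZMod 2) = 0) from rfl, zero_smul]

/-- `1 + Ĉ` as a unit of `F₂C` (it is its own inverse). -/
def uC (n : ℕ) (hn : 1 ≤ n) : (FC n)ˣ :=
  ⟨1 + hatC n, 1 + hatC n, by
    have h : (1 + hatC n) * (1 + hatC n) = 1 + (hatC n + hatC n) + hatC n * hatC n := by ring
    rw [h, add_self_FC, hatC_mul_hatC n hn, add_zero, add_zero], by
    have h : (1 + hatC n) * (1 + hatC n) = 1 + (hatC n + hatC n) + hatC n * hatC n := by ring
    rw [h, add_self_FC, hatC_mul_hatC n hn, add_zero, add_zero]⟩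



/-! ### Auxiliary machinery -/

instance FCcoe (n : ℕ) : CoeFun (FC n) (fun _ => Cgrp n → ZMod 2) := ⟨fun x => x.coeff⟩

variable {n : ℕ}

/-- `2^(n-1)` in `ZMod (2^n)`. -/
def Hc (n : ℕ) : ZMod (2^n) := (2:ZMod (2^n))^(n-1)
/-- `2^(n-2)` in `ZMod (2^n)`. -/
def Qc (n : ℕ) : ZMod (2^n) := (2:ZMod (2^n))^(n-2)

lemma NZ (n : ℕ) : NeZero (2^n) := ⟨by positivity⟩

lemma natCast_val_eq (i : ZMod (2^n)) : ((i.val : ℕ) : ZMod (2^n)) = i := by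
  have : NeZero (2^n) := NZ n
  exact ZMod.natCast_rightInverse i

lemma Hc_natCast : ((2^(n-1) : ℕ) : ZMod (2^n)) = Hc n := by
  push_cast [Hc]; ring

lemma Qc_natCast : ((2^(n-2) : ℕ) : ZMod (2^n)) = Qc n := by
  push_cast [Qc]; ring

lemma Hc_val (hn : 1 ≤ n) : (Hc n).val = 2^(n-1) := by
  rw [← Hc_natCast, ZMod.val_natCast, Nat.mod_eq_of_lt (by
    exact Nat.pow_lt_pow_right (by norm_num) (by omega))]

lemma Hc_ne_zero (hn : 1 ≤ n) : Hc n ≠ 0 := by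
  intro h
  have := Hc_val hn
  rw [h, ZMod.val_zero] at this
  exact absurd this.symm (by positivity)

lemma Hc_add_Hc : Hc n + Hc n = 0 := by
  by_cases hn : 1 ≤ n
  · have h0 : ((2^n : ℕ) : ZMod (2^n)) = 0 := ZMod.natCast_self _
    rw [← Hc_natCast, ← Nat.cast_add, show 2^(n-1) + 2^(n-1) = 2^n by
      rw [← two_mul, ← pow_succ']; congr 1; omega, h0]
  · interval_cases n
    decide

lemma Qc_add_Qc (hn : 2 ≤ n) : Qc n + Qc n = Hc n := by
  rw [Qc, Hc, ← two_mul, ← pow_succ']; congr 1; omega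

lemma cf_eq_Hc : cf n = Hc n - 1 := rfl

lemma two_mul_eq_zero_iff (hn : 1 ≤ n) (i : ZMod (2^n)) :
    2 * i = 0 ↔ i = 0 ∨ i = Hc n := by
  constructor
  · intro h
    have hi := natCast_val_eq i
    have h' : ((2 * i.val : ℕ) : ZMod (2^n)) = 0 := by push_cast [hi]; exact h
    rw [ZMod.natCast_eq_zero_iff] at h'
    have hd : 2^(n-1) ∣ i.val := by
      rcases h' with ⟨c, hc⟩
      have h2n : 2^n = 2 * 2^(n-1) := by rw [← pow_succ']; congr 1; omega
      have hc' : 2 * i.val = 2 * (2^(n-1) * c) := by rw [hc, h2n]; ring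
      exact ⟨c, Nat.eq_of_mul_eq_mul_left (by norm_num) hc'⟩
    rcases hd with ⟨c, hc⟩
    have hlt : i.val < 2^n := ZMod.val_lt i
    have hc01 : c = 0 ∨ c = 1 := by
      have h2n : 2^n = 2^(n-1) * 2 := by rw [← pow_succ]; congr 1; omega
      rcases Nat.lt_or_ge c 2 with h | h
      · omega
      · exfalso; have : 2^n ≤ i.val := by rw [hc, h2n]; exact Nat.mul_le_mul_left _ h
        omega
    rcases hc01 with h0 | h1
    · left; rw [← hi, hc, h0, mul_zero, Nat.cast_zero]
    · right; rw [← hi, hc, h1, mul_one, Hc_natCast]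
  · rintro (h | h) <;> rw [h]
    · ring
    · rw [two_mul, Hc_add_Hc]

lemma cf_mul_self_eq_iff (hn : 3 ≤ n) (i : ZMod (2^n)) :
    cf n * i = i ↔ i = 0 ∨ i = Hc n := by
  rw [← two_mul_eq_zero_iff (by omega) i]
  have hu : IsUnit ((2:ZMod (2^n))^(n-2) - 1) := by
    have hcast : ((2^(n-2) - 1 : ℕ) : ZMod (2^n)) = (2:ZMod (2^n))^(n-2) - 1 := by
      have h2 : 2 ≤ 2^(n-2) := Nat.one_lt_two_pow (by omega)
      push_cast [Nat.cast_sub (by omega : 1 ≤ 2^(n-2))]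
      ring
    rw [← hcast, ZMod.isUnit_iff_coprime]
    apply Nat.Coprime.pow_right
    rw [Nat.coprime_two_right]
    have h2 : 2 ≤ 2^(n-2) := Nat.one_lt_two_pow (by omega)
    have hdvd : (2:ℕ) ∣ 2^(n-2) := dvd_pow_self 2 (by omega)
    rcases hdvd with ⟨k, hk⟩
    exact ⟨k - 1, by omega⟩
  have h2 : cf n - 1 = 2 * ((2:ZMod (2^n))^(n-2) - 1) := by
    rw [cf_eq_Hc, Hc]
    rw [show (2:ZMod (2^n))^(n-1) = 2 * 2^(n-2) by rw [← pow_succ']; congr 1; omega]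
    ring
  constructor
  · intro h
    have h1 : (cf n - 1) * i = 0 := by rw [sub_mul, h, one_mul, sub_self]
    have h3 : (2 * i) * ((2:ZMod (2^n))^(n-2) - 1) = 0 := by
      rw [← h1, h2]; ring
    exact (hu.mul_left_eq_zero).mp h3
  · intro h
    have h1 : (cf n - 1) * i = 0 := by
      rw [h2, mul_assoc, mul_comm ((2:ZMod (2^n))^(n-2) - 1), ← mul_assoc, h, zero_mul]
    have h4 : cf n * i - i = 0 := by rw [← h1]; ring
    exact sub_eq_zero.mp h4

lemma cf_mul_cf (hn : 2 ≤ n) : cf n * cf n = 1 := cf_sq n hn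

/-! ### Sums and coefficients -/

lemma z2_add_self (z : ZMod 2) : z + z = 0 := by fin_cases z <;> decide
lemma z2_sq (z : ZMod 2) : z * z = z := by revert z; decide

lemma sum_mult (f : Cgrp n → ZMod 2) :
    ∑ g : Cgrp n, f g = ∑ i : ZMod (2^n), f (Multiplicative.ofAdd i) := by
  refine Finset.sum_equiv (Multiplicative.toAdd) (by simp) (fun g _ => rfl)

lemma mul_apply_univ (x y : FC n) (m : ZMod (2^n)) :
    (x * y) (Multiplicative.ofAdd m) =
      ∑ i : ZMod (2^n), x (Multiplicative.ofAdd i) * y (Multiplicative.ofAdd (m - i)) := by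
  rw [MonoidAlgebra.mul_apply_left]
  rw [Finsupp.sum_fintype _ _ (by intro a; simp), sum_mult]
  refine Finset.sum_congr rfl (fun i _ => ?_)
  congr 1
  show y ((Multiplicative.ofAdd i)⁻¹ * Multiplicative.ofAdd m) = _
  rw [← ofAdd_neg, ← ofAdd_add]
  congr 1
  ring

lemma aug_apply (x : FC n) : aug n x = ∑ i : ZMod (2^n), x (Multiplicative.ofAdd i) := by
  rw [aug, MonoidAlgebra.lift_apply]
  rw [Finsupp.sum_fintype _ _ (by intro a; simp), sum_mult]
  simp

lemma aug_apply_sum (x : FC n) : aug n x = ∑ g : Cgrp n, x g := by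
  rw [aug, MonoidAlgebra.lift_apply]
  rw [Finsupp.sum_fintype _ _ (by intro a; simp)]
  refine Finset.sum_congr rfl (fun g _ => by simp)

lemma FC_ext (x y : FC n)
    (h : ∀ i : ZMod (2^n), x (Multiplicative.ofAdd i) = y (Multiplicative.ofAdd i)) :
    x = y := MonoidAlgebra.ext (Finsupp.ext (fun g => h g.toAdd))

lemma sum_invol {ι : Type*} [Fintype ι] [DecidableEq ι] (σ : ι → ι) (hσ : ∀ i, σ (σ i) = i)
    (f : ι → ZMod 2) (hf : ∀ i, f (σ i) = f i) :
    ∑ i, f i = ∑ i ∈ Finset.univ.filter (fun i => σ i = i), f i := by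
  classical
  rw [← Finset.sum_filter_add_sum_filter_not Finset.univ (fun i => σ i = i) f]
  have h0 : ∑ i ∈ Finset.univ.filter (fun i => ¬ σ i = i), f i = 0 := by
    apply Finset.sum_involution (fun a _ => σ a)
    · intro a ha; rw [hf]; exact z2_add_self _
    · intro a ha _; simpa using (Finset.mem_filter.mp ha).2
    · intro a ha; simp only [Finset.mem_filter, Finset.mem_univ, true_and] at *
      intro hc; exact ha (by rw [← hσ a, hc, hc])
    · intro a ha; exact hσ a
  rw [h0, add_zero]

lemma sq_apply (hn : 1 ≤ n) (x : FC n) (j : ZMod (2^n)) :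
    (x*x) (Multiplicative.ofAdd (j + j)) =
      x (Multiplicative.ofAdd j) + x (Multiplicative.ofAdd (j + Hc n)) := by
  rw [mul_apply_univ]
  rw [sum_invol (fun i => j + j - i) (fun i => by ring) _ (fun i => by
    rw [mul_comm, show j + j - (j + j - i) = i by ring])]
  have hfilter : Finset.univ.filter (fun i : ZMod (2^n) => j + j - i = i) = {j, j + Hc n} := by
    ext i
    simp only [Finset.mem_filter, Finset.mem_univ, true_and, Finset.mem_insert,
      Finset.mem_singleton]
    constructor
    · intro h
      have h2 : 2 * (i - j) = 0 := by linear_combination -h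
      rcases (two_mul_eq_zero_iff hn _).mp h2 with h' | h'
      · left; linear_combination h'
      · right; linear_combination h'
    · rintro (h | h) <;> rw [h]
      · ring
      · linear_combination (-1 : ZMod (2^n)) * Hc_add_Hc
  rw [hfilter]
  rw [Finset.sum_insert (by
    simp only [Finset.mem_singleton]
    intro h
    exact Hc_ne_zero hn (by linear_combination -h)), Finset.sum_singleton]
  congr 1
  · rw [show j + j - j = j by ring, z2_sq]
  · rw [show j + j - (j + Hc n) = j + Hc n by
      linear_combination (-1 : ZMod (2^n)) * Hc_add_Hc, z2_sq]

lemma sq_apply_odd (x : FC n) (m : ZMod (2^n)) (hm : ¬ ∃ j, m = j + j) :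
    (x*x) (Multiplicative.ofAdd m) = 0 := by
  rw [mul_apply_univ]
  rw [sum_invol (fun i => m - i) (fun i => by ring) _ (fun i => by
    rw [mul_comm, show m - (m - i) = i by ring])]
  have : Finset.univ.filter (fun i : ZMod (2^n) => m - i = i) = ∅ := by
    ext i
    simp only [Finset.mem_filter, Finset.mem_univ, true_and, Finset.notMem_empty,
      iff_false]
    intro h
    exact hm ⟨i, by linear_combination h⟩
  rw [this, Finset.sum_empty]

lemma exists_half (m : ZMod (2^n)) (hm : Even m.val) : ∃ j : ZMod (2^n), m = j + j := by
  rcases hm with ⟨k, hk⟩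
  refine ⟨((k : ℕ) : ZMod (2^n)), ?_⟩
  rw [← natCast_val_eq m, hk]
  push_cast
  ring

lemma even_of_double (hn : 1 ≤ n) (j m : ZMod (2^n)) (h : m = j + j) : Even m.val := by
  have hcast : ((2 * j.val : ℕ) : ZMod (2^n)) = m := by
    push_cast [natCast_val_eq]
    rw [h]; ring
  have hkey : ∀ v : ℕ, Even (2 * v % 2^n) := by
    intro v
    rw [show (2:ℕ)^n = 2 * 2^(n-1) from by rw [← pow_succ']; congr 1; omega,
      Nat.mul_mod_mul_left]
    exact ⟨v % 2^(n-1), by ring⟩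
  have hval : m.val = 2 * j.val % 2^n := by rw [← hcast, ZMod.val_natCast]
  rw [hval]
  exact hkey _

/-- `D x i` only via the two coefficient pattern: squares determined -/
lemma sq_congr (hn : 1 ≤ n) (x y : FC n)
    (h : ∀ i : ZMod (2^n), x (Multiplicative.ofAdd i) + x (Multiplicative.ofAdd (i + Hc n))
        = y (Multiplicative.ofAdd i) + y (Multiplicative.ofAdd (i + Hc n))) :
    x * x = y * y := by
  apply FC_ext
  intro m
  by_cases hev : Even m.val
  · rcases exists_half m hev with ⟨j, rfl⟩
    rw [sq_apply hn, sq_apply hn, h]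
  · rw [sq_apply_odd x m, sq_apply_odd y m]
    · intro ⟨j, hj⟩; exact hev (even_of_double hn j m hj)
    · intro ⟨j, hj⟩; exact hev (even_of_double hn j m hj)

/-! ### units -/

lemma FC_eq_sum_single (x : FC n) :
    x = ∑ g : Cgrp n, MonoidAlgebra.single g (x g) := by
  ext h
  rw [MonoidAlgebra.coeff_sum, Finset.sum_apply']
  rw [Finset.sum_eq_single h]
  · simp [MonoidAlgebra.single_apply]
  · intro b _ hb; simp [MonoidAlgebra.single_apply, hb]
  · intro hh; exact absurd (Finset.mem_univ h) hh

lemma pow_card_eq (x : FC n) : x ^ (2^n) = algebraMap (ZMod 2) (FC n) (aug n x) := by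
  haveI hchar : CharP (FC n) 2 := charP_of_injective_algebraMap
    (algebraMap (ZMod 2) (FC n)).injective 2
  conv_lhs => rw [FC_eq_sum_single x]
  rw [sum_pow_char_pow]
  have hterm : ∀ g : Cgrp n, (MonoidAlgebra.single g (x g) : FC n) ^ (2^n)
      = algebraMap (ZMod 2) (FC n) (x g) := by
    intro g
    rw [MonoidAlgebra.single_pow]
    have hg : g ^ (2^n) = 1 := by
      have hm : ∀ m : ZMod (2^n), (Multiplicative.ofAdd m)^(2^n) = (1 : Cgrp n) := by
        intro m
        rw [← ofAdd_nsmul]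
        have : (2^n : ℕ) • m = 0 := by
          rw [nsmul_eq_mul, show ((2^n : ℕ) : ZMod (2^n)) = 0 from ZMod.natCast_self _,
            zero_mul]
        rw [this]; rfl
      calc g ^ (2^n) = (Multiplicative.ofAdd (g.toAdd))^(2^n) := rfl
      _ = 1 := hm _
    have hc : (x g) ^ (2^n) = x g := by
      have h01 : x g = 0 ∨ x g = 1 := by
        generalize x g = z; revert z; decide
      rcases h01 with h | h <;> rw [h] <;>
        simp [zero_pow (by positivity : (2:ℕ)^n ≠ 0)]
    rw [hg, hc]
    rcases (show x g = 0 ∨ x g = 1 by generalize x g = z; revert z; decide) with h | h <;>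
      rw [h] <;> simp [MonoidAlgebra.one_def]
  have hsum : (∑ g : Cgrp n, (MonoidAlgebra.single g (x g) : FC n)^(2^n))
      = ∑ g : Cgrp n, algebraMap (ZMod 2) (FC n) (x g) :=
    Finset.sum_congr rfl (fun g _ => hterm g)
  rw [hsum, ← map_sum, aug_apply_sum x]

lemma isUnit_of_aug (x : FC n) (hx : aug n x = 1) : IsUnit x := by
  have hnil : IsNilpotent (x - 1) := by
    refine ⟨2^n, ?_⟩
    haveI hchar : CharP (FC n) 2 := charP_of_injective_algebraMap
      (algebraMap (ZMod 2) (FC n)).injective 2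
    rw [show (x - 1) ^ (2:ℕ)^n = x^(2:ℕ)^n - 1^(2:ℕ)^n from sub_pow_char_pow ..]
    rw [pow_card_eq, hx, map_one, one_pow, sub_self]
  have := hnil.isUnit_add_one
  simpa using this

/-! ### sqSpan -/

lemma sq_add_FC (x y : FC n) : (x + y) * (x + y) = x * x + y * y := by
  have h : x * y + y * x = 0 := by rw [mul_comm]; exact add_self_FC n _
  calc (x+y)*(x+y) = x*x + y*y + (x*y + y*x) := by ring
  _ = x*x + y*y := by rw [h, add_zero]

lemma mem_sqSpan_iff (x : FC n) : x ∈ sqSpan n ↔ ∃ w : FC n, x = w * w := by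
  constructor
  · intro hx
    refine Submodule.span_induction ?_ ?_ ?_ ?_ hx
    · rintro y ⟨g, rfl⟩
      exact ⟨MonoidAlgebra.of (ZMod 2) (Cgrp n) g, by rw [← map_mul]⟩
    · exact ⟨0, by rw [mul_zero]⟩
    · rintro y z _ _ ⟨u, rfl⟩ ⟨v, rfl⟩
      exact ⟨u + v, (sq_add_FC u v).symm⟩
    · rintro c y _ ⟨u, rfl⟩
      rcases (show c = 0 ∨ c = 1 by revert c; decide) with h | h <;> rw [h]
      · exact ⟨0, by rw [mul_zero, zero_smul]⟩
      · exact ⟨u, by rw [one_smul]⟩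
  · rintro ⟨w, rfl⟩
    have hw : w * w = ∑ g ∈ w.coeff.support, (w g) • MonoidAlgebra.of (ZMod 2) (Cgrp n) (g * g) := by
      conv_lhs => rw [FC_eq_sum_single w]
      haveI hchar : CharP (FC n) 2 := charP_of_injective_algebraMap
        (algebraMap (ZMod 2) (FC n)).injective 2
      rw [show (∑ g : Cgrp n, (MonoidAlgebra.single g (w g) : FC n)) *
          (∑ g : Cgrp n, (MonoidAlgebra.single g (w g) : FC n)) =
          (∑ g : Cgrp n, (MonoidAlgebra.single g (w g) : FC n))^2 by ring]
      rw [sum_pow_char]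
      rw [← Finset.sum_subset (Finset.subset_univ w.coeff.support) (by
        intro g _ hg
        have : w g = 0 := Finsupp.notMem_support_iff.mp hg
        rw [show ((MonoidAlgebra.single g (w g) : FC n))^2
            = MonoidAlgebra.single (g*g) ((w g)^2) by rw [MonoidAlgebra.single_pow, pow_two], this]
        simp)]
      refine Finset.sum_congr rfl (fun g _ => ?_)
      rw [show ((MonoidAlgebra.single g (w g) : FC n))^2
          = MonoidAlgebra.single (g*g) ((w g)^2) by rw [MonoidAlgebra.single_pow, pow_two]]
      rw [show (w g)^2 = w g from by rw [pow_two, z2_sq]]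
      rw [MonoidAlgebra.of_apply, MonoidAlgebra.smul_single', mul_one]
    rw [hw]
    apply Submodule.sum_mem
    intro g _
    exact Submodule.smul_mem _ _ (Submodule.subset_span ⟨g, rfl⟩)

/-! ### the involution: coefficients -/

lemma star_apply (hn : 2 ≤ n) (x : FC n) (i : ZMod (2^n)) :
    starTwo n hn x (Multiplicative.ofAdd i) = x (Multiplicative.ofAdd (cf n * i)) := by
  rw [starTwo, MonoidAlgebra.coeff_domCongr]
  rfl

lemma starTwo_starTwo (hn : 2 ≤ n) (x : FC n) : starTwo n hn (starTwo n hn x) = x := by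
  apply FC_ext
  intro i
  rw [star_apply hn, star_apply hn, ← mul_assoc, cf_mul_cf hn, one_mul]

lemma aug_star (hn : 2 ≤ n) (x : FC n) : aug n (starTwo n hn x) = aug n x := by
  rw [aug_apply, aug_apply]
  have hbij : Function.Bijective (fun i : ZMod (2^n) => cf n * i) :=
    Function.Involutive.bijective (fun i => by
      show cf n * (cf n * i) = i
      rw [← mul_assoc, cf_mul_cf hn, one_mul])
  exact Fintype.sum_bijective _ hbij _ _ (fun i => star_apply hn x i)

/-! ### fibers over `ZMod (2^(n-1))` -/

/-- the projection to `ZMod (2^(n-1))` -/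
def piF (n : ℕ) : ZMod (2^n) →+* ZMod (2^(n-1)) :=
  ZMod.castHom (pow_dvd_pow 2 (Nat.sub_le n 1)) _

/-- the section `ZMod (2^(n-1)) → ZMod (2^n)` by vals -/
def iotaF (n : ℕ) (j : ZMod (2^(n-1))) : ZMod (2^n) := ((j.val : ℕ) : ZMod (2^n))

/-- `2^(n-2)` in `ZMod (2^(n-1))` -/
def Qb (n : ℕ) : ZMod (2^(n-1)) := ((2^(n-2) : ℕ) : ZMod (2^(n-1)))

lemma piF_natCast (k : ℕ) : piF n ((k : ℕ) : ZMod (2^n)) = (k : ZMod (2^(n-1))) := by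
  simp [piF]

lemma piF_iota (j : ZMod (2^(n-1))) : piF n (iotaF n j) = j := by
  haveI := NZ (n-1)
  rw [iotaF, piF_natCast]
  exact ZMod.natCast_rightInverse j

lemma iota_val (hn : 1 ≤ n) (j : ZMod (2^(n-1))) : (iotaF n j).val = j.val := by
  haveI := NZ n
  rw [iotaF, ZMod.val_natCast, Nat.mod_eq_of_lt]
  calc j.val < 2^(n-1) := ZMod.val_lt j
  _ ≤ 2^n := Nat.pow_le_pow_right (by norm_num) (by omega)

lemma piF_Hc : piF n (Hc n) = 0 := by
  rw [← Hc_natCast, piF_natCast]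
  exact ZMod.natCast_self _

lemma piF_Qc (hn : 2 ≤ n) : piF n (Qc n) = Qb n := by
  rw [← Qc_natCast, piF_natCast, Qb]

lemma piF_cf (hn : 1 ≤ n) : piF n (cf n) = -1 := by
  rw [cf_eq_Hc, map_sub, piF_Hc, map_one, zero_sub]

lemma piF_ker (hn : 1 ≤ n) (z : ZMod (2^n)) (h : piF n z = 0) : z = 0 ∨ z = Hc n := by
  haveI := NZ n
  have hv : ((z.val : ℕ) : ZMod (2^(n-1))) = 0 := by
    rw [← piF_natCast, natCast_val_eq]; exact h
  rw [ZMod.natCast_eq_zero_iff] at hv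
  rcases hv with ⟨c, hc⟩
  have hlt : z.val < 2^n := ZMod.val_lt z
  have h2 : (2:ℕ)^n = 2^(n-1) * 2 := by rw [← pow_succ]; congr 1; omega
  have hc01 : c = 0 ∨ c = 1 := by
    rcases Nat.lt_or_ge c 2 with h' | h'
    · omega
    · exfalso
      have : 2^n ≤ z.val := by rw [hc, h2]; exact Nat.mul_le_mul_left _ h'
      omega
  rcases hc01 with h' | h'
  · left; rw [← natCast_val_eq z, hc, h', mul_zero, Nat.cast_zero]
  · right; rw [← natCast_val_eq z, hc, h', mul_one, Hc_natCast]

lemma fiber (hn : 1 ≤ n) (i : ZMod (2^n)) :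
    i = iotaF n (piF n i) ∨ i = iotaF n (piF n i) + Hc n := by
  have h : piF n (i - iotaF n (piF n i)) = 0 := by
    rw [map_sub, piF_iota, sub_self]
  rcases piF_ker hn _ h with h' | h'
  · left; linear_combination h'
  · right; linear_combination h'

lemma Qb_val (hn : 2 ≤ n) : (Qb n).val = 2^(n-2) := by
  haveI := NZ (n-1)
  rw [Qb, ZMod.val_natCast, Nat.mod_eq_of_lt]
  exact Nat.pow_lt_pow_right (by norm_num) (by omega)

lemma Qb_ne_zero (hn : 2 ≤ n) : Qb n ≠ 0 := by
  intro h
  have := Qb_val hn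
  rw [h, ZMod.val_zero] at this
  exact absurd this.symm (by positivity)

lemma Qb_add_Qb (hn : 2 ≤ n) : Qb n + Qb n = 0 := by
  rw [Qb, ← Nat.cast_add, show 2^(n-2) + 2^(n-2) = 2^(n-1) by
    rw [← two_mul, ← pow_succ']; congr 1; omega]
  exact ZMod.natCast_self _

lemma iota_zero : iotaF n (0 : ZMod (2^(n-1))) = 0 := by
  rw [iotaF, ZMod.val_zero, Nat.cast_zero]

lemma iota_Qb (hn : 2 ≤ n) : iotaF n (Qb n) = Qc n := by
  rw [iotaF, Qb_val hn, Qc_natCast]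

/-! ### parity facts -/

lemma Hc_mul_even (hn : 1 ≤ n) (i : ZMod (2^n)) (h : Even i.val) : Hc n * i = 0 := by
  rcases h with ⟨k, hk⟩
  have : i = ((2 * k : ℕ) : ZMod (2^n)) := by
    rw [← natCast_val_eq i, hk]; push_cast; ring
  rw [this, ← Hc_natCast, ← Nat.cast_mul]
  have h2 : 2^(n-1) * (2 * k) = 2^n * k := by
    rw [show (2:ℕ)^n = 2^(n-1)*2 by rw [← pow_succ]; congr 1; omega]; ring
  rw [h2, Nat.cast_mul, ZMod.natCast_self, zero_mul]

lemma Hc_mul_odd (hn : 1 ≤ n) (i : ZMod (2^n)) (h : Odd i.val) : Hc n * i = Hc n := by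
  rcases h with ⟨k, hk⟩
  have : i = ((2 * k + 1 : ℕ) : ZMod (2^n)) := by
    rw [← natCast_val_eq i, hk]
  rw [this]
  push_cast
  have h2 : Hc n * 2 = 0 := by rw [mul_two, Hc_add_Hc]
  calc Hc n * (2 * (k:ZMod (2^n)) + 1) = (Hc n * 2) * k + Hc n := by ring
  _ = Hc n := by rw [h2, zero_mul, zero_add]

lemma cf_mul_even (hn : 1 ≤ n) (i : ZMod (2^n)) (h : Even i.val) : cf n * i = -i := by
  rw [cf_eq_Hc, sub_mul, Hc_mul_even hn i h, one_mul, zero_sub]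

lemma cf_mul_odd (hn : 1 ≤ n) (i : ZMod (2^n)) (h : Odd i.val) : cf n * i = Hc n - i := by
  rw [cf_eq_Hc, sub_mul, Hc_mul_odd hn i h, one_mul]

lemma Qc_val (hn : 2 ≤ n) : (Qc n).val = 2^(n-2) := by
  rw [← Qc_natCast, ZMod.val_natCast, Nat.mod_eq_of_lt (by
    exact Nat.pow_lt_pow_right (by norm_num) (by omega))]

lemma cf_mul_Hc (hn : 2 ≤ n) : cf n * Hc n = Hc n := by
  have he : Even (Hc n).val := by
    rw [Hc_val (by omega)]
    exact ⟨2^(n-2), by rw [← two_mul, ← pow_succ']; congr 1; omega⟩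
  rw [cf_mul_even (by omega) _ he]
  linear_combination (-1 : ZMod (2^n)) * Hc_add_Hc

lemma cf_mul_Qc (hn : 3 ≤ n) : cf n * Qc n = Qc n + Hc n := by
  have he : Even (Qc n).val := by
    rw [Qc_val (by omega)]
    exact ⟨2^(n-3), by rw [← two_mul, ← pow_succ']; congr 1; omega⟩
  rw [cf_mul_even (by omega) _ he]
  linear_combination (-1 : ZMod (2^n)) * Qc_add_Qc (by omega : 2 ≤ n)
    - Hc_add_Hc

lemma neg_val (hn : 1 ≤ n) (i : ZMod (2^n)) :
    i.val + (-i).val = 0 ∨ i.val + (-i).val = 2^n := by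
  haveI := NZ n
  by_cases h : i = 0
  · left; rw [h, neg_zero, ZMod.val_zero]
  · right
    haveI : NeZero i := ⟨h⟩
    rw [ZMod.val_neg_of_ne_zero]
    have h1 : 0 < i.val := by
      rcases Nat.eq_zero_or_pos i.val with h' | h'
      · exfalso; exact h (by rw [← natCast_val_eq i, h', Nat.cast_zero])
      · exact h'
    have h2 : i.val < 2^n := ZMod.val_lt i
    omega

lemma val_add_disj (hn : 1 ≤ n) (i j : ZMod (2^n)) :
    (i + j).val = i.val + j.val ∨ (i + j).val + 2^n = i.val + j.val := by
  haveI := NZ n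
  rw [ZMod.val_add]
  have h1 : i.val < 2^n := ZMod.val_lt i
  have h2 : j.val < 2^n := ZMod.val_lt j
  rcases Nat.lt_or_ge (i.val + j.val) (2^n) with h | h
  · left; rw [Nat.mod_eq_of_lt h]
  · right
    rw [Nat.mod_eq_sub_mod h, Nat.mod_eq_of_lt (by omega)]
    omega


/-! ### fiber-invariance of the `D` pattern -/

lemma D_fiber (hn : 1 ≤ n) (x : FC n) (i i' : ZMod (2^n)) (h : piF n i = piF n i') :
    x (Multiplicative.ofAdd i) + x (Multiplicative.ofAdd (i + Hc n))
      = x (Multiplicative.ofAdd i') + x (Multiplicative.ofAdd (i' + Hc n)) := by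
  have hcases : i' = i ∨ i' = i + Hc n ∨ i = i' + Hc n := by
    rcases fiber hn i with h1 | h1 <;> rcases fiber hn i' with h2 | h2 <;>
      rw [← h] at h2
    · left; rw [h2, ← h1]
    · right; left; rw [h2, ← h1]
    · right; right; rw [h1, ← h2]
    · left; rw [h2, ← h1]
  have hHH : ∀ m : ZMod (2^n), m + Hc n + Hc n = m := by
    intro m; linear_combination Hc_add_Hc
  rcases hcases with hc | hc | hc
  · rw [hc]
  · rw [hc, hHH, add_comm]
  · rw [hc, hHH, add_comm]

/-! ### the norm coefficient identity -/

lemma norm_coeff (hn : 3 ≤ n) (z : FC n) (hz : aug n z = 1) :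
    (z * starTwo n (Nat.le_of_succ_le hn) z) (Multiplicative.ofAdd (0 : ZMod (2^n)))
      + (z * starTwo n (Nat.le_of_succ_le hn) z) (Multiplicative.ofAdd (Hc n)) = 1 := by
  have h2n : (2:ℕ) ≤ n := by omega
  rw [mul_apply_univ, mul_apply_univ, ← Finset.sum_add_distrib]
  have hpt : ∀ i : ZMod (2^n),
      z (Multiplicative.ofAdd i) * starTwo n (by omega : 2 ≤ n) z (Multiplicative.ofAdd (0 - i))
        + z (Multiplicative.ofAdd i) * starTwo n (by omega : 2 ≤ n) z (Multiplicative.ofAdd (Hc n - i))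
      = z (Multiplicative.ofAdd i) * z (Multiplicative.ofAdd i)
        + z (Multiplicative.ofAdd i) * z (Multiplicative.ofAdd (i + Hc n)) := by
    intro i
    rw [star_apply, star_apply]
    rcases Nat.even_or_odd i.val with hev | hod
    · have e1 : cf n * (0 - i) = i := by
        rw [show (0 : ZMod (2^n)) - i = -i by ring,
          show cf n * -i = -(cf n * i) by ring, cf_mul_even (by omega) i hev, neg_neg]
      have e2 : cf n * (Hc n - i) = i + Hc n := by
        have hcfH := cf_mul_Hc h2n
        have hcfe := cf_mul_even (by omega : 1 ≤ n) i hev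
        linear_combination hcfH - hcfe
      rw [e1, e2]
    · have hcf := cf_mul_odd (by omega : 1 ≤ n) i hod
      have hcfH := cf_mul_Hc h2n
      have e1 : cf n * (0 - i) = i + Hc n := by
        linear_combination (-1 : ZMod (2^n)) * hcf - Hc_add_Hc
      have e2 : cf n * (Hc n - i) = i := by
        linear_combination hcfH - hcf
      rw [e1, e2, add_comm]
  have hrw : (∑ i : ZMod (2^n),
      (z (Multiplicative.ofAdd i) * starTwo n (by omega : 2 ≤ n) z (Multiplicative.ofAdd (0 - i))
        + z (Multiplicative.ofAdd i) * starTwo n (by omega : 2 ≤ n) z (Multiplicative.ofAdd (Hc n - i))))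
      = ∑ i : ZMod (2^n),
      (z (Multiplicative.ofAdd i) * z (Multiplicative.ofAdd i)
        + z (Multiplicative.ofAdd i) * z (Multiplicative.ofAdd (i + Hc n))) :=
    Finset.sum_congr rfl (fun i _ => hpt i)
  rw [hrw, Finset.sum_add_distrib]
  have hsq : ∑ i : ZMod (2^n), z (Multiplicative.ofAdd i) * z (Multiplicative.ofAdd i) = 1 := by
    have h' : ∀ i : ZMod (2^n), z (Multiplicative.ofAdd i) * z (Multiplicative.ofAdd i)
        = z (Multiplicative.ofAdd i) := fun i => z2_sq _
    rw [Finset.sum_congr rfl (fun i _ => h' i), ← aug_apply, hz]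
  have hcross : ∑ i : ZMod (2^n),
      z (Multiplicative.ofAdd i) * z (Multiplicative.ofAdd (i + Hc n)) = 0 := by
    rw [sum_invol (fun i => i + Hc n)
      (fun i => by show i + Hc n + Hc n = i; rw [add_assoc, Hc_add_Hc, add_zero]) _
      (fun i => by
        show z (Multiplicative.ofAdd (i + Hc n)) * z (Multiplicative.ofAdd (i + Hc n + Hc n))
          = z (Multiplicative.ofAdd i) * z (Multiplicative.ofAdd (i + Hc n))
        rw [mul_comm, add_assoc, Hc_add_Hc, add_zero])]
    have hfe : Finset.univ.filter (fun i : ZMod (2^n) => i + Hc n = i) = ∅ := by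
      ext i
      simp only [Finset.mem_filter, Finset.mem_univ, true_and, Finset.notMem_empty, iff_false]
      intro h
      exact Hc_ne_zero (n := n) (by omega) (by linear_combination h)
    rw [hfe, Finset.sum_empty]
  rw [hsq, hcross, add_zero]

/-! ### the selection predicate and the construction -/

/-- selection of fiber representatives -/
def Csel (q v : ℕ) : Prop :=
  v = 0 ∨ (v % 2 = 1 ∧ v < 2*q) ∨ (v % 2 = 0 ∧ 0 < v ∧ v < q) ∨ (v % 2 = 0 ∧ 3*q < v)

instance (q v : ℕ) : Decidable (Csel q v) := by unfold Csel; infer_instance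

lemma Qb_eq_Hc (hn : 2 ≤ n) : Hc (n-1) = Qb n := by
  rw [show Hc (n-1) = ((2^(n-1-1) : ℕ) : ZMod (2^(n-1))) from (Hc_natCast (n := n-1)).symm]
  rw [show n-1-1 = n-2 by omega]
  rfl

lemma construct (hn : 3 ≤ n) (d : ZMod (2^(n-1)) → ZMod 2)
    (hd0 : d 0 = 1) (hdQ : d (Qb n) = 0) (hds : ∀ j, d (-j) = d j) :
    ∃ s : FC n, aug n s = 1 ∧ starTwo n (Nat.le_of_succ_le hn) s = s ∧
      ∀ i : ZMod (2^n),
        s (Multiplicative.ofAdd i) + s (Multiplicative.ofAdd (i + Hc n)) = d (piF n i) := by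
  have hfacts : (2:ℕ)^n = 4*2^(n-2) ∧ (2:ℕ)^(n-1) = 2*2^(n-2) ∧ 2 ≤ (2:ℕ)^(n-2)
      ∧ (2:ℕ)^(n-2) % 2 = 0 := by
    refine ⟨?_, ?_, Nat.one_lt_two_pow (by omega), ?_⟩
    · rw [show (4:ℕ) = 2^2 from rfl, ← pow_add]; congr 1; omega
    · rw [← pow_succ']; congr 1; omega
    · have : (2:ℕ)^(n-2) = 2 * 2^(n-3) := by rw [← pow_succ']; congr 1; omega
      omega
  classical
  set e : ZMod (2^n) → ZMod 2 :=
    fun i => if Csel (2^(n-2)) i.val then d (piF n i) else 0 with he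
  set s : FC n := MonoidAlgebra.ofCoeff (Finsupp.equivFunOnFinite.symm (fun g : Cgrp n => e g.toAdd)) with hsdef
  have hs : ∀ i : ZMod (2^n), s (Multiplicative.ofAdd i) = e i := fun i => rfl
  have hP2 : ∀ i : ZMod (2^n), e i + e (i + Hc n) = d (piF n i) := by
    intro i
    have hpi2 : piF n (i + Hc n) = piF n i := by rw [map_add, piF_Hc, add_zero]
    have hv : i.val < 2^n := ZMod.val_lt i
    have hv2 : (i + Hc n).val < 2^n := ZMod.val_lt _
    have hdisj := val_add_disj (by omega) i (Hc n)
    rw [Hc_val (by omega)] at hdisj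
    show (if Csel (2^(n-2)) i.val then d (piF n i) else 0)
      + (if Csel (2^(n-2)) (i + Hc n).val then d (piF n (i + Hc n)) else 0) = d (piF n i)
    rw [hpi2]
    obtain ⟨f1, f2, f3, f4⟩ := hfacts
    by_cases h1 : Csel (2^(n-2)) i.val <;> by_cases h2 : Csel (2^(n-2)) (i + Hc n).val
    · exfalso; revert h1 h2; unfold Csel; omega
    · rw [if_pos h1, if_neg h2, add_zero]
    · rw [if_neg h1, if_pos h2, zero_add]
    · rw [if_neg h1, if_neg h2, add_zero]
      have hQQ : i.val = 2^(n-2) ∨ i.val = 3*2^(n-2) := by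
        revert h1 h2; unfold Csel; omega
      have hpiQ : piF n i = Qb n := by
        rcases hQQ with h | h
        · rw [← natCast_val_eq i, h, piF_natCast]; rfl
        · rw [← natCast_val_eq i, h, piF_natCast]
          have h3 : (3*2^(n-2) : ℕ) = 2^(n-2) + 2^(n-1) := by omega
          rw [h3, Nat.cast_add, ZMod.natCast_self, add_zero]
          rfl
      rw [hpiQ, hdQ]
  have hP1 : ∀ i : ZMod (2^n), e (cf n * i) = e i := by
    intro i
    have hdpi : d (piF n (cf n * i)) = d (piF n i) := by
      rw [map_mul, piF_cf (by omega), neg_one_mul, hds]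
    show (if Csel (2^(n-2)) (cf n * i).val then d (piF n (cf n * i)) else 0)
      = (if Csel (2^(n-2)) i.val then d (piF n i) else 0)
    rw [hdpi]
    obtain ⟨f1, f2, f3, f4⟩ := hfacts
    have hv : i.val < 2^n := ZMod.val_lt i
    have hiff : Csel (2^(n-2)) (cf n * i).val ↔ Csel (2^(n-2)) i.val := by
      rcases Nat.even_or_odd i.val with hev | hod
      · rw [cf_mul_even (by omega) i hev]
        have hev' : i.val % 2 = 0 := Nat.even_iff.mp hev
        have hneg := neg_val (by omega : 1 ≤ n) i
        have hnv : (-i).val < 2^n := ZMod.val_lt _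
        unfold Csel; omega
      · rw [cf_mul_odd (by omega) i hod]
        have hod' : i.val % 2 = 1 := Nat.odd_iff.mp hod
        have hneg := neg_val (by omega : 1 ≤ n) i
        have hd2 := val_add_disj (by omega : 1 ≤ n) (Hc n) (-i)
        rw [Hc_val (by omega)] at hd2
        have hsub : Hc n - i = Hc n + (-i) := by ring
        rw [hsub]
        have hnv : (-i).val < 2^n := ZMod.val_lt _
        have hv3 : (Hc n + -i).val < 2^n := ZMod.val_lt _
        unfold Csel; omega
    by_cases h : Csel (2^(n-2)) i.val
    · rw [if_pos h, if_pos (hiff.mpr h)]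
    · rw [if_neg h, if_neg (fun hc => h (hiff.mp hc))]
  refine ⟨s, ?_, ?_, ?_⟩
  · -- augmentation
    rw [aug_apply]
    have hEbij : Function.Bijective
        (fun p : ZMod (2^(n-1)) × Bool => iotaF n p.1 + (if p.2 then Hc n else 0)) := by
      constructor
      · rintro ⟨j, b⟩ ⟨j', b'⟩ hEq
        have hEq' : iotaF n j + (if b then Hc n else 0)
            = iotaF n j' + (if b' then Hc n else 0) := hEq
        have hif : ∀ c : Bool, piF n (if c then Hc n else 0) = 0 := by
          intro c; cases c
          · simp
          · simpa using piF_Hc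
        have hpi := congrArg (piF n) hEq'
        rw [map_add, map_add, piF_iota, piF_iota, hif, hif, add_zero, add_zero] at hpi
        subst hpi
        have hb : (if b then Hc n else 0) = (if b' then Hc n else 0) :=
          add_left_cancel hEq'
        cases b <;> cases b'
        · rfl
        · exfalso
          rw [if_neg (by simp), if_pos rfl] at hb
          exact Hc_ne_zero (n := n) (by omega) hb.symm
        · exfalso
          rw [if_pos rfl, if_neg (by simp)] at hb
          exact Hc_ne_zero (n := n) (by omega) hb
        · rfl
      · intro i
        rcases fiber (by omega : 1 ≤ n) i with h | h
        · exact ⟨(piF n i, false), by simpa using h.symm⟩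
        · exact ⟨(piF n i, true), by simpa using h.symm⟩
    have h2 : ∀ j : ZMod (2^(n-1)),
        (∑ b : Bool, s (Multiplicative.ofAdd (iotaF n j + (if b then Hc n else 0)))) = d j := by
      intro j
      rw [Fintype.sum_bool]
      rw [if_pos rfl, if_neg (by simp), add_zero]
      rw [hs, hs, add_comm, hP2 (iotaF n j), piF_iota]
    have hsumd : (∑ j : ZMod (2^(n-1)), d j) = 1 := by
      rw [sum_invol (fun j => -j) (fun j => neg_neg j) d (fun j => hds j)]
      have hfix : Finset.univ.filter (fun j : ZMod (2^(n-1)) => -j = j) = {0, Qb n} := by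
        ext j
        simp only [Finset.mem_filter, Finset.mem_univ, true_and, Finset.mem_insert,
          Finset.mem_singleton]
        constructor
        · intro h
          have h2j : 2 * j = 0 := by linear_combination -h
          rcases (two_mul_eq_zero_iff (n := n-1) (by omega) j).mp h2j with h' | h'
          · left; exact h'
          · right; rw [h', Qb_eq_Hc (by omega)]
        · rintro (h | h) <;> rw [h]
          · rw [neg_zero]
          · have := Qb_add_Qb (by omega : 2 ≤ n)
            linear_combination -this
      rw [hfix, Finset.sum_insert (by
        simp only [Finset.mem_singleton]
        exact fun h => Qb_ne_zero (by omega) h.symm), Finset.sum_singleton, hd0, hdQ, add_zero]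
    calc ∑ i : ZMod (2^n), s (Multiplicative.ofAdd i)
        = ∑ p : ZMod (2^(n-1)) × Bool,
            s (Multiplicative.ofAdd (iotaF n p.1 + (if p.2 then Hc n else 0))) :=
          (Fintype.sum_bijective _ hEbij _ _ (fun p => rfl)).symm
      _ = ∑ j : ZMod (2^(n-1)), ∑ b : Bool,
            s (Multiplicative.ofAdd (iotaF n j + (if b then Hc n else 0))) :=
          Fintype.sum_prod_type _
      _ = ∑ j : ZMod (2^(n-1)), d j := Finset.sum_congr rfl (fun j _ => h2 j)
      _ = 1 := hsumd
  · -- symmetry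
    apply FC_ext
    intro i
    rw [star_apply (by omega), hs, hs, hP1]
  · -- the D values
    intro i
    rw [hs, hs, hP2]


/-! ### group-element algebra -/

lemma ofAdd_eq_iff (a b : ZMod (2^n)) :
    (Multiplicative.ofAdd a = Multiplicative.ofAdd b) ↔ a = b :=
  Equiv.apply_eq_iff_eq _

lemma A_def : A n = MonoidAlgebra.single (Multiplicative.ofAdd (1 : ZMod (2^n))) 1 := rfl

lemma A_pow (m : ℕ) :
    (A n)^m = MonoidAlgebra.single (Multiplicative.ofAdd ((m : ℕ) : ZMod (2^n))) 1 := by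
  rw [A_def, MonoidAlgebra.single_pow, one_pow]
  congr 1
  show (Multiplicative.ofAdd (1 : ZMod (2^n)))^m = _
  rw [← ofAdd_nsmul]
  congr 1
  rw [nsmul_eq_mul, mul_one]

lemma cA : (A n)^(2^(n-1)) = MonoidAlgebra.single (Multiplicative.ofAdd (Hc n)) 1 := by
  rw [A_pow, Hc_natCast]

lemma single_mul_single' (a b : ZMod (2^n)) :
    (MonoidAlgebra.single (Multiplicative.ofAdd a) (1:ZMod 2))
      * MonoidAlgebra.single (Multiplicative.ofAdd b) (1:ZMod 2)
    = MonoidAlgebra.single (Multiplicative.ofAdd (a + b)) (1:ZMod 2) := by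
  rw [MonoidAlgebra.single_mul_single, one_mul]
  rfl

lemma aug_single (g : Cgrp n) : aug n (MonoidAlgebra.single g (1 : ZMod 2)) = 1 := by
  rw [aug, MonoidAlgebra.lift_single]
  simp

lemma star_single (hn : 2 ≤ n) (a : ZMod (2^n)) :
    starTwo n hn (MonoidAlgebra.single (Multiplicative.ofAdd a) (1:ZMod 2))
      = MonoidAlgebra.single (Multiplicative.ofAdd (cf n * a)) 1 := by
  apply FC_ext
  intro i
  rw [star_apply hn]
  rw [MonoidAlgebra.coeff_single_apply, MonoidAlgebra.coeff_single_apply]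
  by_cases h : a = cf n * i
  · rw [if_pos (by rw [ofAdd_eq_iff]; exact h), if_pos (by
      rw [ofAdd_eq_iff, h, ← mul_assoc, cf_mul_cf hn, one_mul])]
  · rw [if_neg (by rw [ofAdd_eq_iff]; exact h), if_neg (by
      rw [ofAdd_eq_iff]
      intro hc
      exact h (by rw [← hc, ← mul_assoc, cf_mul_cf hn, one_mul]))]

lemma star_fix_pt (hn : 2 ≤ n) (x : FC n) (hx : starTwo n hn x = x) (i : ZMod (2^n)) :
    x (Multiplicative.ofAdd (cf n * i)) = x (Multiplicative.ofAdd i) :=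
  (star_apply hn x i).symm.trans (by rw [hx])

lemma aug_symm (hn : 3 ≤ n) (x : FC n) (hx : starTwo n (Nat.le_of_succ_le hn) x = x) :
    aug n x = x (Multiplicative.ofAdd (0:ZMod (2^n))) + x (Multiplicative.ofAdd (Hc n)) := by
  rw [aug_apply]
  rw [sum_invol (fun i => cf n * i)
    (fun i => by show cf n * (cf n * i) = i; rw [← mul_assoc, cf_mul_cf (by omega), one_mul]) _
    (fun i => by
      show x (Multiplicative.ofAdd (cf n * i)) = x (Multiplicative.ofAdd i)
      exact star_fix_pt (by omega) x hx i)]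
  have hfix : Finset.univ.filter (fun i : ZMod (2^n) => cf n * i = i) = {0, Hc n} := by
    ext i
    simp only [Finset.mem_filter, Finset.mem_univ, true_and, Finset.mem_insert,
      Finset.mem_singleton]
    exact cf_mul_self_eq_iff hn i
  rw [hfix, Finset.sum_insert (by
    simp only [Finset.mem_singleton]
    exact fun h => Hc_ne_zero (n := n) (by omega) h.symm), Finset.sum_singleton]

/-- the `D`-value of a symmetric element at `Qc` vanishes -/
lemma D_Qc_zero (hn : 3 ≤ n) (x : FC n) (hx : starTwo n (Nat.le_of_succ_le hn) x = x) :
    x (Multiplicative.ofAdd (Qc n)) + x (Multiplicative.ofAdd (Qc n + Hc n)) = 0 := by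
  rw [show Qc n + Hc n = cf n * Qc n from (cf_mul_Qc hn).symm]
  rw [star_fix_pt (by omega) x hx]
  exact z2_add_self _

/-! ### the cardinality of the parameter space -/

lemma card_window (hn : 3 ≤ n) :
    Nat.card {j : ZMod (2^(n-1)) // 0 < j.val ∧ j.val < 2^(n-2)} = 2^(n-2) - 1 := by
  rw [Nat.card_eq_fintype_card, Fintype.card_subtype]
  rw [show (Finset.univ.filter
      (fun j : ZMod (2^(n-1)) => 0 < j.val ∧ j.val < 2^(n-2))).card
      = (Finset.Ioo 0 (2^(n-2))).card from ?_]
  · rw [Nat.card_Ioo]; omega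
  · refine Finset.card_bij (fun j _ => j.val) ?_ ?_ ?_
    · intro a ha
      simp only [Finset.mem_filter, Finset.mem_univ, true_and] at ha
      simp only [Finset.mem_Ioo]
      exact ha
    · intro a ha b hb hab
      have hab' : a.val = b.val := hab
      rw [← natCast_val_eq (n := n-1) a, ← natCast_val_eq (n := n-1) b, hab']
    · intro b hb
      simp only [Finset.mem_Ioo] at hb
      have hlt : b < 2^(n-1) := by
        calc b < 2^(n-2) := hb.2
        _ ≤ 2^(n-1) := Nat.pow_le_pow_right (by norm_num) (by omega)
      haveI := NZ (n-1)
      have hval : ((b : ℕ) : ZMod (2^(n-1))).val = b := by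
        rw [ZMod.val_natCast, Nat.mod_eq_of_lt hlt]
      refine ⟨((b : ℕ) : ZMod (2^(n-1))), ?_, hval⟩
      simp only [Finset.mem_filter, Finset.mem_univ, true_and, hval]
      exact hb

lemma card_P (hn : 3 ≤ n) :
    Nat.card {d : ZMod (2^(n-1)) → ZMod 2 // d 0 = 1 ∧ d (Qb n) = 0 ∧ ∀ j, d (-j) = d j}
      = 2^(2^(n-2)-1) := by
  have hq2 : (2:ℕ) ≤ 2^(n-2) := Nat.one_lt_two_pow (by omega)
  have hq2' : (2:ℕ)^(n-1) = 2*2^(n-2) := by rw [← pow_succ']; congr 1; omega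
  have hQbv : (Qb n).val = 2^(n-2) := Qb_val (by omega)
  have hzv : ((0 : ZMod (2^(n-1)))).val = 0 := ZMod.val_zero
  -- the restriction map
  set Ψ : {d : ZMod (2^(n-1)) → ZMod 2 // d 0 = 1 ∧ d (Qb n) = 0 ∧ ∀ j, d (-j) = d j}
      → ({j : ZMod (2^(n-1)) // 0 < j.val ∧ j.val < 2^(n-2)} → ZMod 2) :=
    fun d jj => d.1 jj.1 with hΨ
  have hval_eq : ∀ j j' : ZMod (2^(n-1)), j.val = j'.val → j = j' := by
    intro j j' h
    rw [← natCast_val_eq (n := n-1) j, ← natCast_val_eq (n := n-1) j', h]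
  have hbij : Function.Bijective Ψ := by
    constructor
    · rintro ⟨d, hd0, hdQ, hds⟩ ⟨d', hd'0, hd'Q, hd's⟩ h
      refine Subtype.ext (funext fun j => ?_)
      show d j = d' j
      have hvlt : j.val < 2^(n-1) := ZMod.val_lt j
      rcases Nat.eq_zero_or_pos j.val with h0 | h0
      · have hj : j = 0 := hval_eq j 0 (by rw [h0, hzv])
        rw [hj]
        show d 0 = d' 0
        rw [hd0, hd'0]
      · by_cases hQ : j.val = 2^(n-2)
        · have hj : j = Qb n := hval_eq j (Qb n) (by rw [hQ, hQbv])
          rw [hj]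
          show d (Qb n) = d' (Qb n)
          rw [hdQ, hd'Q]
        · rcases Nat.lt_or_ge j.val (2^(n-2)) with hlt | hge
          · exact congrFun h ⟨j, h0, hlt⟩
          · have hj0 : j ≠ 0 := fun hc => by rw [hc, hzv] at h0; omega
            have hneg := neg_val (n := n-1) (by omega) j
            have hnegv : (-j).val = 2^(n-1) - j.val := by
              rcases hneg with h' | h'
              · exfalso; omega
              · omega
            have hcond : 0 < (-j).val ∧ (-j).val < 2^(n-2) := by omega
            have e1 : d j = d (-j) := (hds j).symm
            have e2 : d' j = d' (-j) := (hd's j).symm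
            rw [e1, e2]
            exact congrFun h ⟨-j, hcond⟩
    · intro w
      -- extension of w to ℕ
      set we : ℕ → ZMod 2 := Function.extend
        (fun jj : {j : ZMod (2^(n-1)) // 0 < j.val ∧ j.val < 2^(n-2)} => jj.1.val)
        w (fun _ => 0) with hwe
      have hinj : Function.Injective
          (fun jj : {j : ZMod (2^(n-1)) // 0 < j.val ∧ j.val < 2^(n-2)} => jj.1.val) := by
        intro a b hab
        exact Subtype.ext (hval_eq _ _ hab)
      have hwe_app : ∀ (j : ZMod (2^(n-1))) (hj : 0 < j.val ∧ j.val < 2^(n-2)),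
          we j.val = w ⟨j, hj⟩ := by
        intro j hj
        rw [hwe]
        exact hinj.extend_apply w _ ⟨j, hj⟩
      set dd : ZMod (2^(n-1)) → ZMod 2 := fun j =>
        if j.val = 0 then 1
        else if j.val = 2^(n-2) then 0
        else if j.val < 2^(n-2) then we j.val
        else we (2^(n-1) - j.val) with hdd
      have hddval : ∀ j : ZMod (2^(n-1)), dd j =
          (if j.val = 0 then 1
            else if j.val = 2^(n-2) then 0
            else if j.val < 2^(n-2) then we j.val
            else we (2^(n-1) - j.val)) := fun j => rfl
      have hdd0 : dd 0 = 1 := by rw [hddval, hzv, if_pos rfl]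
      have hddQ : dd (Qb n) = 0 := by
        rw [hddval, hQbv, if_neg (by omega), if_pos rfl]
      have hdds : ∀ j, dd (-j) = dd j := by
        intro j
        have hvlt : j.val < 2^(n-1) := ZMod.val_lt j
        rcases Nat.eq_zero_or_pos j.val with h0 | h0
        · rw [hval_eq j 0 (by rw [h0, hzv]), neg_zero]
        · have hj0 : j ≠ 0 := fun hc => by rw [hc, hzv] at h0; omega
          have hneg := neg_val (n := n-1) (by omega) j
          have hnegv : (-j).val = 2^(n-1) - j.val := by
            rcases hneg with h' | h'
            · exfalso; omega
            · omega
          by_cases hQ : j.val = 2^(n-2)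
          · have hL : dd (-j) = 0 := by
              rw [hddval, hnegv, if_neg (by omega), if_pos (by omega)]
            have hR : dd j = 0 := by
              rw [hddval, if_neg (by omega), if_pos hQ]
            rw [hL, hR]
          · rcases Nat.lt_or_ge j.val (2^(n-2)) with hlt | hge
            · have hL : dd (-j) = we (2^(n-1) - (2^(n-1) - j.val)) := by
                rw [hddval, hnegv, if_neg (by omega), if_neg (by omega), if_neg (by omega)]
              have hR : dd j = we j.val := by
                rw [hddval, if_neg (by omega), if_neg (by omega), if_pos hlt]
              rw [hL, hR]
              congr 1
              omega
            · have hL : dd (-j) = we (2^(n-1) - j.val) := by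
                rw [hddval, hnegv, if_neg (by omega), if_neg (by omega), if_pos (by omega)]
              have hR : dd j = we (2^(n-1) - j.val) := by
                rw [hddval, if_neg (by omega), if_neg (by omega), if_neg (by omega)]
              rw [hL, hR]
      refine ⟨⟨dd, hdd0, hddQ, hdds⟩, ?_⟩
      funext jj
      obtain ⟨j, hj1, hj2⟩ := jj
      show dd j = w ⟨j, hj1, hj2⟩
      have hv0 : j.val ≠ 0 := by omega
      rw [hddval, if_neg hv0, if_neg (by omega), if_pos hj2]
      exact hwe_app j ⟨hj1, hj2⟩
  rw [Nat.card_eq_of_bijective Ψ hbij]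
  rw [Nat.card_eq_fintype_card, Fintype.card_fun]
  rw [show Fintype.card {j : ZMod (2^(n-1)) // 0 < j.val ∧ j.val < 2^(n-2)}
      = 2^(n-2) - 1 from by rw [← Nat.card_eq_fintype_card]; exact card_window hn]
  rw [ZMod.card 2]


/-! ### symmetric square helpers -/

lemma symm_d (hn : 3 ≤ n) (s : FC n) (hss : starTwo n (Nat.le_of_succ_le hn) s = s)
    (j : ZMod (2^(n-1))) :
    s (Multiplicative.ofAdd (iotaF n (-j))) + s (Multiplicative.ofAdd (iotaF n (-j) + Hc n))
      = s (Multiplicative.ofAdd (iotaF n j)) + s (Multiplicative.ofAdd (iotaF n j + Hc n)) := by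
  have hpi : piF n (iotaF n (-j)) = piF n (cf n * iotaF n j) := by
    rw [piF_iota, map_mul, piF_cf (by omega), piF_iota, neg_one_mul]
  rw [D_fiber (by omega) s _ _ hpi]
  rw [star_fix_pt (by omega) s hss (iotaF n j)]
  congr 1
  rw [show cf n * iotaF n j + Hc n = cf n * (iotaF n j + Hc n) from by
    rw [mul_add, cf_mul_Hc (by omega)]]
  exact star_fix_pt (by omega) s hss _

lemma D_eq_of_iota (hn : 3 ≤ n) (x y : FC n)
    (h : ∀ j : ZMod (2^(n-1)),
      x (Multiplicative.ofAdd (iotaF n j)) + x (Multiplicative.ofAdd (iotaF n j + Hc n))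
        = y (Multiplicative.ofAdd (iotaF n j)) + y (Multiplicative.ofAdd (iotaF n j + Hc n))) :
    x * x = y * y := by
  apply sq_congr (show 1 ≤ n by omega)
  intro i
  rw [D_fiber (by omega) x i (iotaF n (piF n i)) (by rw [piF_iota]),
      D_fiber (by omega) y i (iotaF n (piF n i)) (by rw [piF_iota])]
  exact h _


/-- For `C` cyclic of order `2^n`, `n ≥ 3`, with involution `⊛`:
`J^⊛ = { z z^⊛ : z ∈ V(F₂C), z z^⊛ ∈ F₂C² }` equals the direct product
`⟨a^(2^(n-1))⟩ × S_⊛(C)²`, and `|S_⊛(C)²| = 2^(2^(n-2)-1)`. -/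
theorem stmt18 (n : ℕ) (hn : 3 ≤ n) :
    {y : FC n | (∃ z : (FC n)ˣ, aug n (↑z : FC n) = 1 ∧
          y = (↑z : FC n) * starTwo n (by omega) ↑z) ∧ y ∈ sqSpan n}
      = {y : FC n | ∃ (k : ℕ) (s : (FC n)ˣ), aug n (↑s : FC n) = 1 ∧
          starTwo n (by omega) (↑s : FC n) = ↑s ∧
          y = ((A n) ^ (2 ^ (n - 1))) ^ k * ((↑s : FC n) * ↑s)} ∧
    (A n) ^ (2 ^ (n - 1)) ∉
      {y : FC n | ∃ s : (FC n)ˣ, aug n (↑s : FC n) = 1 ∧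
          starTwo n (by omega) (↑s : FC n) = ↑s ∧ y = (↑s : FC n) * ↑s} ∧
    Nat.card {y : FC n // ∃ s : (FC n)ˣ, aug n (↑s : FC n) = 1 ∧
          starTwo n (by omega) (↑s : FC n) = ↑s ∧ y = (↑s : FC n) * ↑s}
      = 2 ^ (2 ^ (n - 2) - 1) := by
  have h2 : (2:ℕ) ≤ n := by omega
  refine ⟨?_, ?_, ?_⟩
  · -- the set equality
    ext y
    simp only [Set.mem_setOf_eq]
    constructor
    · rintro ⟨⟨z, hz1, hz2⟩, hysq⟩
      obtain ⟨w, hw⟩ := (mem_sqSpan_iff y).mp hysq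
      have haugy : aug n y = 1 := by
        rw [hz2, map_mul, aug_star (by omega), hz1, one_mul]
      have haugw : aug n w = 1 := by
        have hsq : aug n w * aug n w = 1 := by rw [← map_mul, ← hw]; exact haugy
        have h01 : ∀ u : ZMod 2, u * u = 1 → u = 1 := by decide
        exact h01 _ hsq
      have hystar : starTwo n (by omega : 2 ≤ n) y = y := by
        rw [hz2, map_mul, starTwo_starTwo (by omega)]
        exact mul_comm _ _
      have hsymD : ∀ i : ZMod (2^n),
          w (Multiplicative.ofAdd (cf n * i)) + w (Multiplicative.ofAdd (cf n * i + Hc n))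
            = w (Multiplicative.ofAdd i) + w (Multiplicative.ofAdd (i + Hc n)) := by
        have hsq : starTwo n (by omega : 2 ≤ n) w * starTwo n (by omega) w = w * w := by
          rw [← map_mul, ← hw, hystar, hw]
        intro i
        have hc : (starTwo n (by omega : 2 ≤ n) w * starTwo n (by omega) w)
            (Multiplicative.ofAdd (i + i)) = (w * w) (Multiplicative.ofAdd (i + i)) := by
          rw [hsq]
        rw [sq_apply (show 1 ≤ n by omega), sq_apply (show 1 ≤ n by omega)] at hc
        rw [star_apply (by omega), star_apply (by omega)] at hc
        rw [show cf n * (i + Hc n) = cf n * i + Hc n from by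
          rw [mul_add, cf_mul_Hc h2]] at hc
        exact hc
      have hnorm : y (Multiplicative.ofAdd (0:ZMod (2^n)))
          + y (Multiplicative.ofAdd (Hc n)) = 1 := by
        rw [hz2]
        exact norm_coeff hn (↑z : FC n) hz1
      set d : ZMod (2^(n-1)) → ZMod 2 :=
        fun j => w (Multiplicative.ofAdd (iotaF n j))
          + w (Multiplicative.ofAdd (iotaF n j + Hc n)) with hd
      have hdval : ∀ j, d j = w (Multiplicative.ofAdd (iotaF n j))
          + w (Multiplicative.ofAdd (iotaF n j + Hc n)) := fun j => rfl
      have hDfib : ∀ i : ZMod (2^n), w (Multiplicative.ofAdd i)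
          + w (Multiplicative.ofAdd (i + Hc n)) = d (piF n i) := by
        intro i
        rw [hdval]
        exact D_fiber (by omega) w i (iotaF n (piF n i)) (by rw [piF_iota])
      have hds : ∀ j, d (-j) = d j := by
        intro j
        rw [hdval, hdval]
        have hpi : piF n (iotaF n (-j)) = piF n (cf n * iotaF n j) := by
          rw [piF_iota, map_mul, piF_cf (by omega), piF_iota, neg_one_mul]
        rw [D_fiber (by omega) w _ _ hpi]
        exact hsymD (iotaF n j)
      have hd0H : d 0 + d (Qb n) = 1 := by
        have e0 : d 0 = y (Multiplicative.ofAdd (0 : ZMod (2^n))) := by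
          have hsq0 := sq_apply (show 1 ≤ n by omega) w 0
          rw [show (0:ZMod (2^n)) + 0 = 0 from add_zero 0] at hsq0
          rw [hdval, iota_zero, hw, hsq0]
        have eH : d (Qb n) = y (Multiplicative.ofAdd (Hc n)) := by
          have hsqQ := sq_apply (show 1 ≤ n by omega) w (Qc n)
          rw [Qc_add_Qc h2] at hsqQ
          rw [hdval, iota_Qb h2, hw, hsqQ]
        rw [e0, eH]
        exact hnorm
      rcases (show d (Qb n) = 0 ∨ d (Qb n) = 1 from by
        generalize d (Qb n) = u; revert u; decide) with hQ | hQ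
      · have hd0 : d 0 = 1 := by
          rw [hQ, add_zero] at hd0H; exact hd0H
        obtain ⟨s, hsa, hss, hsD⟩ := construct hn d hd0 hQ hds
        have hunit := isUnit_of_aug s hsa
        refine ⟨0, hunit.unit, ?_, ?_, ?_⟩
        · rw [IsUnit.unit_spec]; exact hsa
        · rw [IsUnit.unit_spec]; exact hss
        · rw [IsUnit.unit_spec, pow_zero, one_mul, hw]
          exact (sq_congr (show 1 ≤ n by omega) s w (fun i => by rw [hsD, hDfib])).symm
      · set w' : FC n := MonoidAlgebra.single (Multiplicative.ofAdd (Qc n)) (1:ZMod 2) * w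
          with hw'
        have hco : ∀ i : ZMod (2^n), w' (Multiplicative.ofAdd i)
            = w (Multiplicative.ofAdd (i - Qc n)) := by
          intro i
          rw [hw', MonoidAlgebra.single_mul_apply, one_mul]
          congr 1
          show (Multiplicative.ofAdd (Qc n))⁻¹ * Multiplicative.ofAdd i = _
          rw [← ofAdd_neg, ← ofAdd_add]
          congr 1
          ring
        set d' : ZMod (2^(n-1)) → ZMod 2 := fun j => d (j - Qb n) with hd'
        have hd'val : ∀ j, d' j = d (j - Qb n) := fun j => rfl
        have hQb2 : Qb n + Qb n = 0 := Qb_add_Qb h2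
        have hd'0 : d' 0 = 1 := by
          rw [hd'val, zero_sub, hds, hQ]
        have hd'Q : d' (Qb n) = 0 := by
          rw [hd'val, sub_self]
          have h' := hd0H
          rw [hQ] at h'
          revert h'
          generalize d 0 = u
          revert u; decide
        have hd's : ∀ j, d' (-j) = d' j := by
          intro j
          rw [hd'val, hd'val]
          have e1 : -j - Qb n = -(j - Qb n) := by linear_combination -hQb2
          rw [e1, hds]
        obtain ⟨s, hsa, hss, hsD⟩ := construct hn d' hd'0 hd'Q hd's
        have hDw' : ∀ i : ZMod (2^n), w' (Multiplicative.ofAdd i)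
            + w' (Multiplicative.ofAdd (i + Hc n)) = d' (piF n i) := by
          intro i
          rw [hco, hco, show i + Hc n - Qc n = (i - Qc n) + Hc n from by ring,
            hDfib (i - Qc n)]
          rw [hd'val, map_sub, piF_Qc h2]
        have hunit := isUnit_of_aug s hsa
        refine ⟨1, hunit.unit, ?_, ?_, ?_⟩
        · rw [IsUnit.unit_spec]; exact hsa
        · rw [IsUnit.unit_spec]; exact hss
        · rw [IsUnit.unit_spec, pow_one]
          rw [show (s : FC n) * s = w' * w' from
            sq_congr (show 1 ≤ n by omega) s w' (fun i => by rw [hsD, hDw'])]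
          rw [hw, cA, hw']
          rw [show MonoidAlgebra.single (Multiplicative.ofAdd (Hc n)) (1:ZMod 2) *
              (MonoidAlgebra.single (Multiplicative.ofAdd (Qc n)) (1:ZMod 2) * w *
               (MonoidAlgebra.single (Multiplicative.ofAdd (Qc n)) (1:ZMod 2) * w))
              = (MonoidAlgebra.single (Multiplicative.ofAdd (Hc n)) (1:ZMod 2) *
                 MonoidAlgebra.single (Multiplicative.ofAdd (Qc n)) (1:ZMod 2) *
                 MonoidAlgebra.single (Multiplicative.ofAdd (Qc n)) (1:ZMod 2)) * (w * w)
              from by ring]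
          rw [single_mul_single', single_mul_single']
          rw [show Hc n + Qc n + Qc n = 0 from by
            linear_combination Qc_add_Qc h2 + Hc_add_Hc]
          rw [show Multiplicative.ofAdd (0 : ZMod (2^n)) = (1 : Cgrp n) from rfl]
          rw [show MonoidAlgebra.single (1 : Cgrp n) (1:ZMod 2) = (1 : FC n) from
            MonoidAlgebra.one_def.symm, one_mul]
    · rintro ⟨k, s, hsa, hss, hy⟩
      constructor
      · have haz : aug n ((A n)^k * ↑s) = 1 := by
          rw [map_mul, map_pow, show aug n (A n) = 1 from aug_single _, one_pow, one_mul, hsa]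
        have hunit := isUnit_of_aug _ haz
        refine ⟨hunit.unit, by rw [IsUnit.unit_spec]; exact haz, ?_⟩
        rw [IsUnit.unit_spec, hy]
        rw [map_mul, map_pow, hss]
        rw [show starTwo n (by omega : 2 ≤ n) (A n)
            = MonoidAlgebra.single (Multiplicative.ofAdd (cf n)) 1 from
          (star_single (by omega) 1).trans (by rw [mul_one])]
        rw [show (A n)^k * (↑s : FC n) *
            ((MonoidAlgebra.single (Multiplicative.ofAdd (cf n)) (1:ZMod 2))^k * ↑s)
            = ((A n) * MonoidAlgebra.single (Multiplicative.ofAdd (cf n)) (1:ZMod 2))^k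
              * ((↑s : FC n) * ↑s) from by rw [mul_pow]; ring]
        rw [show (A n) * MonoidAlgebra.single (Multiplicative.ofAdd (cf n)) (1:ZMod 2)
            = (A n)^(2^(n-1)) from by
          rw [cA, A_def, single_mul_single',
            show (1 : ZMod (2^n)) + cf n = Hc n from by rw [cf_eq_Hc]; ring]]
      · rw [hy, mem_sqSpan_iff]
        refine ⟨((A n)^(2^(n-2)))^k * ↑s, ?_⟩
        rw [show (((A n)^(2^(n-2)))^k * (↑s : FC n)) * (((A n)^(2^(n-2)))^k * ↑s)
            = (((A n)^(2^(n-2)) * (A n)^(2^(n-2)))^k) * ((↑s : FC n) * ↑s) from by ring]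
        rw [← pow_add, show 2^(n-2) + 2^(n-2) = 2^(n-1) from by
          rw [← two_mul, ← pow_succ']; congr 1; omega]
  · -- a^(2^(n-1)) is not a symmetric square
    rintro ⟨s, hsa, hss, hceq⟩
    have h1 : ((A n)^(2^(n-1)) : FC n) (Multiplicative.ofAdd (Hc n)) = 1 := by
      rw [cA, MonoidAlgebra.coeff_single_apply, if_pos rfl]
    have h2' : ((↑s * ↑s : FC n)) (Multiplicative.ofAdd (Hc n)) = 0 := by
      have hq := Qc_add_Qc h2
      rw [← hq, sq_apply (show 1 ≤ n by omega)]
      exact D_Qc_zero hn (↑s) hss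
    rw [hceq, h2'] at h1
    exact zero_ne_one h1
  · -- the cardinality
    rw [← card_P hn]
    have hmem : ∀ (y : FC n), (∃ s : (FC n)ˣ, aug n (↑s : FC n) = 1 ∧
        starTwo n (by omega : 2 ≤ n) (↑s : FC n) = ↑s ∧ y = (↑s : FC n) * ↑s) →
        (y (Multiplicative.ofAdd (iotaF n (0:ZMod (2^(n-1))) + iotaF n 0)) = 1
        ∧ y (Multiplicative.ofAdd (iotaF n (Qb n) + iotaF n (Qb n))) = 0
        ∧ ∀ j : ZMod (2^(n-1)), y (Multiplicative.ofAdd (iotaF n (-j) + iotaF n (-j)))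
            = y (Multiplicative.ofAdd (iotaF n j + iotaF n j))) := by
      rintro y ⟨s, hsa, hss, rfl⟩
      refine ⟨?_, ?_, ?_⟩
      · rw [iota_zero]
        have hsq0 := sq_apply (show 1 ≤ n by omega) (↑s : FC n) 0
        rw [hsq0, zero_add]
        rw [← aug_symm hn _ hss]
        exact hsa
      · rw [iota_Qb h2]
        rw [sq_apply (show 1 ≤ n by omega)]
        exact D_Qc_zero hn _ hss
      · intro j
        rw [sq_apply (show 1 ≤ n by omega), sq_apply (show 1 ≤ n by omega)]
        exact symm_d hn (↑s) hss j
    apply Nat.card_eq_of_bijective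
      (fun yy => (⟨fun j => yy.1 (Multiplicative.ofAdd (iotaF n j + iotaF n j)),
        (hmem yy.1 yy.2).1, (hmem yy.1 yy.2).2.1, (hmem yy.1 yy.2).2.2⟩ :
        {d : ZMod (2^(n-1)) → ZMod 2 // d 0 = 1 ∧ d (Qb n) = 0 ∧ ∀ j, d (-j) = d j}))
    constructor
    · rintro ⟨y, hy⟩ ⟨y', hy'⟩ hf
      have hfun : ∀ j : ZMod (2^(n-1)),
          y (Multiplicative.ofAdd (iotaF n j + iotaF n j))
            = y' (Multiplicative.ofAdd (iotaF n j + iotaF n j)) :=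
        fun j => congrFun (congrArg Subtype.val hf) j
      refine Subtype.ext ?_
      show y = y'
      obtain ⟨s, _, _, rfl⟩ := hy
      obtain ⟨s', _, _, rfl⟩ := hy'
      apply D_eq_of_iota hn
      intro j
      have hj := hfun j
      rw [sq_apply (show 1 ≤ n by omega), sq_apply (show 1 ≤ n by omega)] at hj
      exact hj
    · rintro ⟨d, hd0, hdQ, hds⟩
      obtain ⟨s, hsa, hss, hsD⟩ := construct hn d hd0 hdQ hds
      have hunit := isUnit_of_aug s hsa
      refine ⟨⟨s * s, hunit.unit, by rw [IsUnit.unit_spec]; exact hsa,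
        by rw [IsUnit.unit_spec]; exact hss, by rw [IsUnit.unit_spec]⟩, ?_⟩
      refine Subtype.ext (funext fun j => ?_)
      show (s*s) (Multiplicative.ofAdd (iotaF n j + iotaF n j)) = d j
      rw [sq_apply (show 1 ≤ n by omega), hsD, piF_iota]

end
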